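/- With the same hypotheses but assuming additionally the derivative bounds |φ_I'(t)| ≤ |I|^{-2}(1+|I|^{-1}|t−c(I)|)^{-N} for all dyadic I, one has for all x ≠ t: ∫_ℝ (∑_{I dyadic} (φ_I'(t))² ψ_I(x)² χ_I(y)/|I|)^{1/2} dy ≤ C/|x − t|². -/

import Mathlib

open Real MeasureTheory

structure DyadicI where
  j : ℤ
  k : ℤ

namespace DyadicI

/-- The length `2^j` of a dyadic interval. -/
noncomputable def len (I : DyadicI) : ℝ := (2 : ℝ) ^ I.j

/-- The underlying set `[k·2^j, (k+1)·2^j)` of a dyadic interval. -/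
def toSet (I : DyadicI) : Set ℝ :=
  Set.Ico ((I.k : ℝ) * (2 : ℝ) ^ I.j) (((I.k : ℝ) + 1) * (2 : ℝ) ^ I.j)

/-- The center of a dyadic interval. -/
noncomputable def center (I : DyadicI) : ℝ := ((I.k : ℝ) + 1/2) * (2 : ℝ) ^ I.j

/-- The diameter of the union of two dyadic intervals. -/
noncomputable def diamUnion (I J : DyadicI) : ℝ :=
  max (((I.k : ℝ) + 1) * (2 : ℝ) ^ I.j) (((J.k : ℝ) + 1) * (2 : ℝ) ^ J.j)
    - min ((I.k : ℝ) * (2 : ℝ) ^ I.j) ((J.k : ℝ) * (2 : ℝ) ^ J.j)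

end DyadicI

namespace S9
-- helper: real nonneg tsum as toReal of ENNReal tsum
lemma not_summable_ofReal_tsum {ι : Type*} {f : ι → ℝ} (hf : ∀ i, 0 ≤ f i)
    (h : ¬ Summable f) : ∑' i, ENNReal.ofReal (f i) = ⊤ := by
  by_contra h'
  have : Summable fun i => (f i).toNNReal := by
    apply ENNReal.tsum_coe_ne_top_iff_summable.mp
    simpa [ENNReal.ofReal] using h'
  apply h
  have := NNReal.summable_coe.mpr this
  simpa [Real.coe_toNNReal _ (hf _)] using this

lemma tsum_eq_toReal {ι : Type*} {f : ι → ℝ} (hf : ∀ i, 0 ≤ f i) :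
    ∑' i, f i = (∑' i, ENNReal.ofReal (f i)).toReal := by
  by_cases h : Summable f
  · rw [← ENNReal.ofReal_tsum_of_nonneg hf h, ENNReal.toReal_ofReal (tsum_nonneg hf)]
  · rw [tsum_eq_zero_of_not_summable h, not_summable_ofReal_tsum hf h]
    simp

lemma ofReal_sqrt_tsum_le {ι : Type*} {f : ι → ℝ} (hf : ∀ i, 0 ≤ f i) :
    ENNReal.ofReal (Real.sqrt (∑' i, f i)) ≤ ∑' i, ENNReal.ofReal (Real.sqrt (f i)) := by
  by_cases h : Summable fun i => Real.sqrt (f i)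
  · set T := ∑' i, Real.sqrt (f i) with hT
    have hTnn : 0 ≤ T := tsum_nonneg fun i => Real.sqrt_nonneg _
    have hle : ∀ i, Real.sqrt (f i) ≤ T := fun i =>
      h.le_tsum i fun j _ => Real.sqrt_nonneg _
    have hfs : ∀ i, f i ≤ T * Real.sqrt (f i) := by
      intro i
      calc f i = Real.sqrt (f i) * Real.sqrt (f i) := (Real.mul_self_sqrt (hf i)).symm
        _ ≤ T * Real.sqrt (f i) := mul_le_mul_of_nonneg_right (hle i) (Real.sqrt_nonneg _)
    have hsf : Summable f := Summable.of_nonneg_of_le hf hfs (h.mul_left T)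
    have h1 : ∑' i, f i ≤ T * T := by
      calc ∑' i, f i ≤ ∑' i, T * Real.sqrt (f i) := Summable.tsum_le_tsum hfs hsf (h.mul_left T)
        _ = T * T := by rw [tsum_mul_left]
    have h2 : Real.sqrt (∑' i, f i) ≤ T := by
      calc Real.sqrt (∑' i, f i) ≤ Real.sqrt (T * T) :=
            Real.sqrt_le_sqrt h1
        _ = T := Real.sqrt_mul_self hTnn
    calc ENNReal.ofReal (Real.sqrt (∑' i, f i)) ≤ ENNReal.ofReal T :=
          ENNReal.ofReal_le_ofReal h2
      _ = ∑' i, ENNReal.ofReal (Real.sqrt (f i)) :=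
          ENNReal.ofReal_tsum_of_nonneg (fun i => Real.sqrt_nonneg _) h
  · rw [not_summable_ofReal_tsum (fun i => Real.sqrt_nonneg _) h]
    exact le_top



lemma range_sq_sum (M : ℕ) :
    ∑ a ∈ Finset.range M, ((1 + (a : ℝ)) ^ 2)⁻¹ ≤ (3:ℝ) - 3 / ((M:ℝ) + 1) := by
  induction M with
  | zero => simp
  | succ M ih =>
    rw [Finset.sum_range_succ]
    have key : ((1 + (M : ℝ)) ^ 2)⁻¹ ≤ 3 / ((M:ℝ) + 1) - 3 / ((M:ℝ) + 2) := by
      have h1 : (0:ℝ) < (M:ℝ) + 1 := by positivity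
      have h2 : (0:ℝ) < (M:ℝ) + 2 := by positivity
      have h3 : (0:ℝ) < (1 + (M:ℝ))^2 := by positivity
      rw [div_sub_div _ _ (ne_of_gt h1) (ne_of_gt h2), inv_eq_one_div,
        div_le_div_iff₀ h3 (by positivity)]
      nlinarith
    have e : (3:ℝ) - 3 / (((M:ℕ) + 1 : ℕ) + 1) = 3 - 3/((M:ℝ) + 2) := by push_cast; ring_nf
    push_cast
    have e2 : (3:ℝ) - 3 / ((M:ℝ) + 1 + 1) = 3 - 3/((M:ℝ) + 2) := by ring_nf
    rw [e2]
    linarith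

lemma nat_sq_sum (t : Finset ℕ) : ∑ a ∈ t, ((1 + (a : ℝ)) ^ 2)⁻¹ ≤ 3 := by
  have hsub : t ⊆ Finset.range (t.sup id + 1) := by
    intro a ha
    simp only [Finset.mem_range]
    exact Nat.lt_succ_of_le (Finset.le_sup (f := id) ha)
  calc ∑ a ∈ t, ((1 + (a : ℝ)) ^ 2)⁻¹
      ≤ ∑ a ∈ Finset.range (t.sup id + 1), ((1 + (a : ℝ)) ^ 2)⁻¹ :=
        Finset.sum_le_sum_of_subset_of_nonneg hsub (fun i _ _ => by positivity)
    _ ≤ (3:ℝ) - 3 / (((t.sup id + 1 : ℕ) : ℝ) + 1) := range_sq_sum _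
    _ ≤ 3 := by
        have : (0:ℝ) ≤ 3 / (((t.sup id + 1 : ℕ) : ℝ) + 1) := by positivity
        linarith

def negToNat : ℤ → ℕ := fun m => (-m).toNat

lemma int_sq_sum (s : Finset ℤ) : ∑ m ∈ s, ((1 + |(m : ℝ)|) ^ 2)⁻¹ ≤ 6 := by
  classical
  rw [← Finset.sum_filter_add_sum_filter_not s (0 ≤ ·)]
  have h1 : ∑ m ∈ s.filter (0 ≤ ·), ((1 + |(m : ℝ)|) ^ 2)⁻¹ ≤ 3 := by
    have hinj : Set.InjOn Int.toNat (s.filter (0 ≤ ·)) := by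
      intro a ha b hb hab
      simp only [Finset.coe_filter, Set.mem_setOf_eq] at ha hb
      omega
    calc ∑ m ∈ s.filter (0 ≤ ·), ((1 + |(m : ℝ)|) ^ 2)⁻¹
        = ∑ a ∈ (s.filter (0 ≤ ·)).image Int.toNat, ((1 + (a:ℝ))^2)⁻¹ := by
          rw [Finset.sum_image hinj]
          apply Finset.sum_congr rfl
          intro m hm
          simp only [Finset.mem_filter] at hm
          have h : |(m:ℝ)| = ((m.toNat : ℕ) : ℝ) := by
            rw [abs_of_nonneg (by exact_mod_cast hm.2)]
            exact_mod_cast (Int.toNat_of_nonneg hm.2).symm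
          rw [h]
      _ ≤ 3 := nat_sq_sum _
  have h2 : ∑ m ∈ s.filter (fun m => ¬ (0 ≤ m)), ((1 + |(m : ℝ)|) ^ 2)⁻¹ ≤ 3 := by
    have hinj : Set.InjOn negToNat (s.filter (fun m => ¬ (0 ≤ m))) := by
      intro a ha b hb hab
      simp only [Finset.coe_filter, Set.mem_setOf_eq] at ha hb
      simp only [negToNat] at hab
      omega
    calc ∑ m ∈ s.filter (fun m => ¬ (0 ≤ m)), ((1 + |(m : ℝ)|) ^ 2)⁻¹
        = ∑ a ∈ (s.filter (fun m => ¬ (0 ≤ m))).image negToNat, ((1 + (a:ℝ))^2)⁻¹ := by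
          rw [Finset.sum_image hinj]
          apply Finset.sum_congr rfl
          intro m hm
          simp only [Finset.mem_filter, not_le] at hm
          have hn : (0:ℤ) ≤ -m := by omega
          have h : |(m:ℝ)| = ((negToNat m : ℕ) : ℝ) := by
            rw [abs_of_neg (by exact_mod_cast hm.2)]
            simp only [negToNat]
            exact_mod_cast congrArg (Int.cast : ℤ → ℝ) (Int.toNat_of_nonneg hn).symm
          rw [h]
      _ ≤ 3 := nat_sq_sum _
  linarith

lemma term_le (v : ℝ) (k : ℤ) :
    ((1 + |v - (k:ℝ)|) ^ 2)⁻¹ ≤ 4 * ((1 + |((k - ⌊v⌋ : ℤ) : ℝ)|) ^ 2)⁻¹ := by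
  have hfl : ((⌊v⌋:ℤ):ℝ) ≤ v := Int.floor_le v
  have hfl2 : v < ((⌊v⌋:ℤ):ℝ) + 1 := Int.lt_floor_add_one v
  have habs : (0:ℝ) ≤ |v - (k:ℝ)| := abs_nonneg _
  have key : 1 + |((k - ⌊v⌋ : ℤ) : ℝ)| ≤ 2 * (1 + |v - (k:ℝ)|) := by
    rcases le_or_gt k ⌊v⌋ with hk | hk
    · have hkr : (k:ℝ) ≤ ((⌊v⌋:ℤ):ℝ) := by exact_mod_cast hk
      have h2 : |((k - ⌊v⌋ : ℤ) : ℝ)| = ((⌊v⌋:ℤ):ℝ) - k := by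
        push_cast
        rw [abs_sub_comm]
        exact abs_of_nonneg (by linarith)
      have h1 : ((⌊v⌋:ℤ):ℝ) - k ≤ |v - (k:ℝ)| := le_trans (by linarith) (le_abs_self _)
      rw [h2]; linarith
    · have hkr : ((⌊v⌋:ℤ):ℝ) + 1 ≤ (k:ℝ) := by exact_mod_cast hk
      have h2 : |((k - ⌊v⌋ : ℤ) : ℝ)| = (k:ℝ) - ((⌊v⌋:ℤ):ℝ) := by
        push_cast
        exact abs_of_nonneg (by linarith)
      have h1 : (k:ℝ) - ((⌊v⌋:ℤ):ℝ) - 1 ≤ |v - (k:ℝ)| := by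
        rw [abs_sub_comm]
        exact le_trans (by linarith) (le_abs_self _)
      rw [h2]; linarith
  have h0 : (0:ℝ) < 1 + |v - (k:ℝ)| := by positivity
  have h0' : (0:ℝ) < 1 + |((k - ⌊v⌋ : ℤ) : ℝ)| := by positivity
  have main : (1:ℝ) / ((1 + |v - (k:ℝ)|) ^ 2) ≤ 4 / ((1 + |((k - ⌊v⌋ : ℤ) : ℝ)|) ^ 2) := by
    rw [div_le_div_iff₀ (by positivity) (by positivity)]
    nlinarith
  calc ((1 + |v - (k:ℝ)|) ^ 2)⁻¹ = 1 / ((1 + |v - (k:ℝ)|) ^ 2) := by rw [one_div]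
    _ ≤ 4 / ((1 + |((k - ⌊v⌋ : ℤ) : ℝ)|) ^ 2) := main
    _ = 4 * ((1 + |((k - ⌊v⌋ : ℤ) : ℝ)|) ^ 2)⁻¹ := by rw [div_eq_mul_inv]

-- the k-sum bound over any finset
lemma ksum_finset (v : ℝ) (s : Finset ℤ) :
    ∑ k ∈ s, ((1 + |v - (k:ℝ)|) ^ 2)⁻¹ ≤ 24 := by
  classical
  have hstep : ∑ k ∈ s, ((1 + |v - (k:ℝ)|) ^ 2)⁻¹
      ≤ ∑ k ∈ s, 4 * ((1 + |((k - ⌊v⌋ : ℤ) : ℝ)|) ^ 2)⁻¹ :=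
    Finset.sum_le_sum fun k _ => term_le v k
  have hinj : ∀ x ∈ s, ∀ y ∈ s, x - ⌊v⌋ = y - ⌊v⌋ → x = y := fun a _ b _ h => by omega
  have himg : ∑ k ∈ s, (fun m : ℤ => ((1 + |(m:ℝ)|)^2)⁻¹) (k - ⌊v⌋)
      = ∑ m ∈ s.image (fun k : ℤ => k - ⌊v⌋), (fun m : ℤ => ((1 + |(m:ℝ)|)^2)⁻¹) m :=
    (Finset.sum_image (g := fun k : ℤ => k - ⌊v⌋) (f := fun m : ℤ => ((1 + |(m:ℝ)|)^2)⁻¹) hinj).symm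
  simp only at himg
  calc ∑ k ∈ s, ((1 + |v - (k:ℝ)|) ^ 2)⁻¹
      ≤ ∑ k ∈ s, 4 * ((1 + |((k - ⌊v⌋ : ℤ) : ℝ)|) ^ 2)⁻¹ := hstep
    _ = 4 * ∑ k ∈ s, ((1 + |((k - ⌊v⌋ : ℤ) : ℝ)|) ^ 2)⁻¹ := by
        rw [← Finset.mul_sum]
    _ ≤ 4 * 6 := by
        have h6 := int_sq_sum (s.image (fun k : ℤ => k - ⌊v⌋))
        rw [himg]
        linarith
    _ = 24 := by norm_num

-- ENNReal version
lemma ksum (v : ℝ) :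
    ∑' k : ℤ, ENNReal.ofReal (((1 + |v - (k:ℝ)|) ^ 2)⁻¹) ≤ ENNReal.ofReal 24 := by
  rw [ENNReal.tsum_eq_iSup_sum]
  apply iSup_le
  intro s
  have : ∑ k ∈ s, ENNReal.ofReal (((1 + |v - (k:ℝ)|) ^ 2)⁻¹)
      = ENNReal.ofReal (∑ k ∈ s, ((1 + |v - (k:ℝ)|) ^ 2)⁻¹) := by
    rw [ENNReal.ofReal_sum_of_nonneg]
    intro i _
    positivity
  rw [this]
  exact ENNReal.ofReal_le_ofReal (ksum_finset v s)



lemma alg1 {A B R : ℝ} (hA : 0 ≤ A) (hB : 0 ≤ B) (hR : 0 ≤ R) (hAB : R ≤ A + B)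
    (hle : A ≤ B) :
    ((1+B)^3)⁻¹ * ((1+A)^3)⁻¹ ≤ 8 * (((1+R)^3)⁻¹ * ((1+A)^2)⁻¹) := by
  have h1 : (0:ℝ) < 1 + A := by linarith
  have h2 : (0:ℝ) < 1 + B := by linarith
  have h3 : (0:ℝ) < 1 + R := by linarith
  have hx : 1 + R ≤ 2 * (1 + B) := by linarith
  have hcube : (1+R)^3 ≤ 8 * (1+B)^3 := by
    calc (1+R)^3 ≤ (2*(1+B))^3 := pow_le_pow_left₀ (by linarith) hx 3
      _ = 8 * (1+B)^3 := by ring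
  have hsq : (1+A)^2 ≤ (1+A)^3 := by nlinarith
  have main : (1:ℝ) / ((1+B)^3 * (1+A)^3) ≤ 8 / ((1+R)^3 * (1+A)^2) := by
    rw [div_le_div_iff₀ (by positivity) (by positivity)]
    nlinarith [pow_pos h1 2, pow_pos h1 3, pow_pos h2 3, pow_pos h3 3]
  calc ((1+B)^3)⁻¹ * ((1+A)^3)⁻¹ = 1 / ((1+B)^3 * (1+A)^3) := by
        rw [one_div, mul_inv]
    _ ≤ 8 / ((1+R)^3 * (1+A)^2) := main
    _ = 8 * (((1+R)^3)⁻¹ * ((1+A)^2)⁻¹) := by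
        rw [div_eq_mul_inv, mul_inv]

lemma alg {A B R : ℝ} (hA : 0 ≤ A) (hB : 0 ≤ B) (hR : 0 ≤ R) (hAB : R ≤ A + B) :
    ((1+B)^3)⁻¹ * ((1+A)^3)⁻¹ ≤
      8 * ((1+R)^3)⁻¹ * (((1+A)^2)⁻¹ + ((1+B)^2)⁻¹) := by
  have h1 : (0:ℝ) < 1 + A := by linarith
  have h2 : (0:ℝ) < 1 + B := by linarith
  have h3 : (0:ℝ) < 1 + R := by linarith
  have e : 8 * ((1+R)^3)⁻¹ * (((1+A)^2)⁻¹ + ((1+B)^2)⁻¹)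
      = 8 * (((1+R)^3)⁻¹ * ((1+A)^2)⁻¹) + 8 * (((1+R)^3)⁻¹ * ((1+B)^2)⁻¹) := by ring
  rw [e]
  rcases le_total A B with h | h
  · have := alg1 hA hB hR hAB h
    have hpos : (0:ℝ) ≤ 8 * (((1+R)^3)⁻¹ * ((1+B)^2)⁻¹) := by positivity
    linarith
  · have := alg1 hB hA hR (by linarith) h
    have hpos : (0:ℝ) ≤ 8 * (((1+R)^3)⁻¹ * ((1+A)^2)⁻¹) := by positivity
    linarith [this, mul_comm (((1+A)^3)⁻¹) (((1+B)^3)⁻¹)]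

lemma jsum {D : ℝ} (hD : 0 < D) :
    ∑' j : ℤ, ENNReal.ofReal ((((2:ℝ)^j)^2)⁻¹ * ((1 + ((2:ℝ)^j)⁻¹ * D)^3)⁻¹)
      ≤ ENNReal.ofReal (4 / D^2) := by
  set L := Int.log 2 D with hL
  have h2L : (2:ℝ)^L ≤ D := by
    have := Int.zpow_log_le_self (b := 2) (by norm_num) hD
    exact_mod_cast this
  have hD2 : D < (2:ℝ)^(L+1) := by
    have := Int.lt_zpow_succ_log_self (b := 2) (by norm_num) D
    exact_mod_cast this
  set f1 : ℤ → ENNReal := fun j => if L+1 ≤ j then ENNReal.ofReal (((4:ℝ)^j)⁻¹) else 0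
    with hf1
  set f2 : ℤ → ENNReal := fun j => if j ≤ L then ENNReal.ofReal ((2:ℝ)^j / D^3) else 0
    with hf2
  have hpow4 : ∀ j : ℤ, ((2:ℝ)^j)^(2:ℕ) = (4:ℝ)^j := by
    intro j
    rw [← zpow_natCast ((2:ℝ)^j) 2, ← zpow_mul]
    rw [show (4:ℝ) = (2:ℝ)^(2:ℤ) by norm_num, ← zpow_mul]
    ring_nf
  have hpt : ∀ j : ℤ, ENNReal.ofReal ((((2:ℝ)^j)^2)⁻¹ * ((1 + ((2:ℝ)^j)⁻¹ * D)^3)⁻¹)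
      ≤ f1 j + f2 j := by
    intro j
    have hp : (0:ℝ) < (2:ℝ)^j := zpow_pos (by norm_num) j
    have ha : (0:ℝ) < ((2:ℝ)^j)⁻¹ * D := by positivity
    by_cases h : L + 1 ≤ j
    · have hb : (((2:ℝ)^j)^2)⁻¹ * ((1 + ((2:ℝ)^j)⁻¹ * D)^3)⁻¹ ≤ ((4:ℝ)^j)⁻¹ := by
        rw [← hpow4 j]
        have h1 : ((1 + ((2:ℝ)^j)⁻¹ * D)^3)⁻¹ ≤ 1 := by
          rw [inv_le_one_iff₀]
          right
          exact one_le_pow₀ (by linarith)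
        calc (((2:ℝ)^j)^(2:ℕ))⁻¹ * ((1 + ((2:ℝ)^j)⁻¹ * D)^3)⁻¹
            ≤ (((2:ℝ)^j)^(2:ℕ))⁻¹ * 1 := by
              apply mul_le_mul_of_nonneg_left h1 (by positivity)
          _ = (((2:ℝ)^j)^(2:ℕ))⁻¹ := by ring
      calc ENNReal.ofReal ((((2:ℝ)^j)^2)⁻¹ * ((1 + ((2:ℝ)^j)⁻¹ * D)^3)⁻¹)
          ≤ ENNReal.ofReal (((4:ℝ)^j)⁻¹) := ENNReal.ofReal_le_ofReal hb
        _ = f1 j := by rw [hf1]; simp [h]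
        _ ≤ f1 j + f2 j := le_self_add
    · have hj : j ≤ L := by omega
      have hb : (((2:ℝ)^j)^2)⁻¹ * ((1 + ((2:ℝ)^j)⁻¹ * D)^3)⁻¹ ≤ (2:ℝ)^j / D^3 := by
        have h1 : ((1 + ((2:ℝ)^j)⁻¹ * D)^3)⁻¹ ≤ ((((2:ℝ)^j)⁻¹ * D)^3)⁻¹ := by
          apply inv_anti₀ (by positivity)
          nlinarith
        have h2 : (((2:ℝ)^j)^2)⁻¹ * ((((2:ℝ)^j)⁻¹ * D)^3)⁻¹ = (2:ℝ)^j / D^3 := by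
          field_simp
        calc (((2:ℝ)^j)^2)⁻¹ * ((1 + ((2:ℝ)^j)⁻¹ * D)^3)⁻¹
            ≤ (((2:ℝ)^j)^2)⁻¹ * ((((2:ℝ)^j)⁻¹ * D)^3)⁻¹ :=
              mul_le_mul_of_nonneg_left h1 (by positivity)
          _ = (2:ℝ)^j / D^3 := h2
      calc ENNReal.ofReal ((((2:ℝ)^j)^2)⁻¹ * ((1 + ((2:ℝ)^j)⁻¹ * D)^3)⁻¹)
          ≤ ENNReal.ofReal ((2:ℝ)^j / D^3) := ENNReal.ofReal_le_ofReal hb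
        _ = f2 j := by rw [hf2]; simp [hj]
        _ ≤ f1 j + f2 j := le_add_self
  have hsplit : ∑' j : ℤ, ENNReal.ofReal ((((2:ℝ)^j)^2)⁻¹ * ((1 + ((2:ℝ)^j)⁻¹ * D)^3)⁻¹)
      ≤ (∑' j : ℤ, f1 j) + ∑' j : ℤ, f2 j := by
    calc _ ≤ ∑' j : ℤ, (f1 j + f2 j) := ENNReal.tsum_le_tsum hpt
      _ = _ := ENNReal.tsum_add
  -- sum of f1
  have hs1 : ∑' j : ℤ, f1 j ≤ ENNReal.ofReal ((4/3) / D^2) := by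
    have hinj : Function.Injective (fun n : ℕ => L + 1 + (n:ℤ)) := by
      intro a b h
      simp only at h
      omega
    have hsupp : Function.support f1 ⊆ Set.range (fun n : ℕ => L + 1 + (n:ℤ)) := by
      intro j hj
      rw [hf1] at hj
      simp only [Function.mem_support] at hj
      by_cases h : L + 1 ≤ j
      · exact ⟨(j - (L+1)).toNat, by simp only; omega⟩
      · exact absurd (by simp [h]) hj
    rw [← Function.Injective.tsum_eq hinj hsupp]
    have heq : ∀ n : ℕ, f1 (L + 1 + (n:ℤ)) =
        ENNReal.ofReal (((4:ℝ)^(L+1))⁻¹ * ((1:ℝ)/4)^n) := by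
      intro n
      simp only [hf1]
      rw [if_pos (by omega : L+1 ≤ L+1+(n:ℤ))]
      congr 1
      rw [zpow_add₀ (by norm_num : (4:ℝ) ≠ 0), mul_inv, zpow_natCast]
      congr 1
      rw [one_div, inv_pow]
    simp_rw [heq]
    have hsummable : Summable (fun n : ℕ => ((4:ℝ)^(L+1))⁻¹ * ((1:ℝ)/4)^n) :=
      (summable_geometric_of_lt_one (by norm_num) (by norm_num)).mul_left _
    rw [← ENNReal.ofReal_tsum_of_nonneg (fun n => by positivity) hsummable]
    apply ENNReal.ofReal_le_ofReal
    rw [tsum_mul_left, tsum_geometric_of_lt_one (by norm_num) (by norm_num)]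
    have h4 : D^2 ≤ (4:ℝ)^(L+1) := by
      rw [← hpow4 (L+1)]
      nlinarith
    have hinv : ((4:ℝ)^(L+1))⁻¹ ≤ (D^2)⁻¹ := by
      apply inv_anti₀ (by positivity) h4
    have : ((1:ℝ) - 1/4)⁻¹ = 4/3 := by norm_num
    rw [this]
    calc ((4:ℝ)^(L+1))⁻¹ * (4/3) ≤ (D^2)⁻¹ * (4/3) := by
          apply mul_le_mul_of_nonneg_right hinv (by norm_num)
      _ = (4/3) / D^2 := by rw [div_eq_mul_inv]; ring
  -- sum of f2
  have hs2 : ∑' j : ℤ, f2 j ≤ ENNReal.ofReal (2 / D^2) := by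
    have hinj : Function.Injective (fun n : ℕ => L - (n:ℤ)) := by
      intro a b h
      simp only at h
      omega
    have hsupp : Function.support f2 ⊆ Set.range (fun n : ℕ => L - (n:ℤ)) := by
      intro j hj
      rw [hf2] at hj
      simp only [Function.mem_support] at hj
      by_cases h : j ≤ L
      · exact ⟨(L - j).toNat, by simp only; omega⟩
      · exact absurd (by simp [h]) hj
    rw [← Function.Injective.tsum_eq hinj hsupp]
    have heq : ∀ n : ℕ, f2 (L - (n:ℤ)) =
        ENNReal.ofReal (((2:ℝ)^L / D^3) * ((1:ℝ)/2)^n) := by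
      intro n
      simp only [hf2]
      rw [if_pos (by omega : L - (n:ℤ) ≤ L)]
      congr 1
      rw [zpow_sub₀ (by norm_num : (2:ℝ) ≠ 0), zpow_natCast]
      rw [one_div, inv_pow, div_mul_eq_mul_div, mul_comm ((2:ℝ)^L) _]
      rw [div_eq_div_iff (by positivity) (by positivity)]
      ring
    simp_rw [heq]
    have hsummable : Summable (fun n : ℕ => ((2:ℝ)^L / D^3) * ((1:ℝ)/2)^n) :=
      (summable_geometric_of_lt_one (by norm_num) (by norm_num)).mul_left _
    rw [← ENNReal.ofReal_tsum_of_nonneg (fun n => by positivity) hsummable]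
    apply ENNReal.ofReal_le_ofReal
    rw [tsum_mul_left, tsum_geometric_of_lt_one (by norm_num) (by norm_num)]
    have : ((1:ℝ) - 1/2)⁻¹ = 2 := by norm_num
    rw [this]
    have hq : (2:ℝ)^L / D^3 ≤ 1 / D^2 := by
      rw [div_le_div_iff₀ (by positivity) (by positivity)]
      nlinarith [zpow_pos (show (0:ℝ) < 2 by norm_num) L]
    calc (2:ℝ)^L / D^3 * 2 ≤ 1/D^2 * 2 := by
          apply mul_le_mul_of_nonneg_right hq (by norm_num)
      _ = 2 / D^2 := by ring
  calc ∑' j : ℤ, ENNReal.ofReal ((((2:ℝ)^j)^2)⁻¹ * ((1 + ((2:ℝ)^j)⁻¹ * D)^3)⁻¹)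
      ≤ (∑' j : ℤ, f1 j) + ∑' j : ℤ, f2 j := hsplit
    _ ≤ ENNReal.ofReal ((4/3) / D^2) + ENNReal.ofReal (2 / D^2) := add_le_add hs1 hs2
    _ = ENNReal.ofReal ((4/3) / D^2 + 2 / D^2) := by
        rw [ENNReal.ofReal_add (by positivity) (by positivity)]
    _ ≤ ENNReal.ofReal (4 / D^2) := by
        apply ENNReal.ofReal_le_ofReal
        rw [← add_div, div_le_div_iff₀ (by positivity) (by positivity)]
        nlinarith



def dEquiv : ℤ × ℤ ≃ DyadicI where
  toFun p := ⟨p.1, p.2⟩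
  invFun I := (I.j, I.k)
  left_inv _ := rfl
  right_inv _ := rfl

instance : Countable DyadicI := Countable.of_equiv _ dEquiv

lemma len_pos (I : DyadicI) : 0 < I.len := zpow_pos (by norm_num) _

lemma volume_toSet (I : DyadicI) : volume I.toSet = ENNReal.ofReal I.len := by
  rw [DyadicI.toSet, Real.volume_Ico]
  congr 1
  rw [DyadicI.len]
  ring

-- rpow weight to nat-pow weight
lemma wN_le {a : ℝ} (ha : 0 ≤ a) {N : ℕ} (hN : 3 ≤ N) :
    (1 + a) ^ (-(N:ℝ)) ≤ ((1 + a) ^ (3:ℕ))⁻¹ := by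
  have hb : (1:ℝ) ≤ 1 + a := by linarith
  have h1 : (1 + a) ^ (-(N:ℝ)) ≤ (1 + a) ^ (-(3:ℝ)) := by
    apply Real.rpow_le_rpow_of_exponent_le hb
    have : (3:ℝ) ≤ (N:ℝ) := by exact_mod_cast hN
    linarith
  have h2 : (1 + a) ^ (-(3:ℝ)) = ((1 + a) ^ (3:ℕ))⁻¹ := by
    rw [show (-(3:ℝ)) = -((3:ℕ):ℝ) by norm_num, Real.rpow_neg (by linarith),
      Real.rpow_natCast]
  rw [← h2]; exact h1

-- the per-interval weight bound after multiplying by the length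
lemma r_mul_len_le (x t : ℝ) (N : ℕ) (hN : 3 ≤ N) (I : DyadicI) :
    (I.len ^ (-(3:ℝ)) * (1 + I.len⁻¹ * |t - I.center|) ^ (-(N:ℝ))
      * (1 + I.len⁻¹ * |x - I.center|) ^ (-(N:ℝ))) * I.len
    ≤ (I.len ^ (2:ℕ))⁻¹ * ((1 + I.len⁻¹ * |t - I.center|) ^ (3:ℕ))⁻¹
      * ((1 + I.len⁻¹ * |x - I.center|) ^ (3:ℕ))⁻¹ := by
  have hl := len_pos I
  have hB : (0:ℝ) ≤ I.len⁻¹ * |t - I.center| := by positivity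
  have hA : (0:ℝ) ≤ I.len⁻¹ * |x - I.center| := by positivity
  have hcomb : I.len ^ (-(3:ℝ)) * I.len = (I.len ^ (2:ℕ))⁻¹ := by
    rw [show I.len ^ (-(3:ℝ)) * I.len = I.len ^ (-(3:ℝ)) * I.len ^ (1:ℝ) by
        rw [Real.rpow_one],
      ← Real.rpow_add hl, show (-(3:ℝ) + 1) = -((2:ℕ):ℝ) by norm_num,
      Real.rpow_neg hl.le, Real.rpow_natCast]
  have e : (I.len ^ (-(3:ℝ)) * (1 + I.len⁻¹ * |t - I.center|) ^ (-(N:ℝ))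
      * (1 + I.len⁻¹ * |x - I.center|) ^ (-(N:ℝ))) * I.len
      = (I.len ^ (-(3:ℝ)) * I.len) * ((1 + I.len⁻¹ * |t - I.center|) ^ (-(N:ℝ))
      * (1 + I.len⁻¹ * |x - I.center|) ^ (-(N:ℝ))) := by ring
  rw [e, hcomb]
  have h1 := wN_le hB hN
  have h2 := wN_le hA hN
  calc (I.len ^ (2:ℕ))⁻¹ * ((1 + I.len⁻¹ * |t - I.center|) ^ (-(N:ℝ))
        * (1 + I.len⁻¹ * |x - I.center|) ^ (-(N:ℝ)))
      ≤ (I.len ^ (2:ℕ))⁻¹ * (((1 + I.len⁻¹ * |t - I.center|) ^ (3:ℕ))⁻¹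
        * ((1 + I.len⁻¹ * |x - I.center|) ^ (3:ℕ))⁻¹) := by
        apply mul_le_mul_of_nonneg_left _ (by positivity)
        apply mul_le_mul h1 h2 (Real.rpow_nonneg (by linarith) _) (by positivity)
    _ = (I.len ^ (2:ℕ))⁻¹ * ((1 + I.len⁻¹ * |t - I.center|) ^ (3:ℕ))⁻¹
        * ((1 + I.len⁻¹ * |x - I.center|) ^ (3:ℕ))⁻¹ := by ring


-- main kernel sum estimate
lemma main_sum (x t : ℝ) (hxt : x ≠ t) :
    ∑' I : DyadicI, ENNReal.ofReal ((I.len ^ (2:ℕ))⁻¹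
        * ((1 + I.len⁻¹ * |t - I.center|) ^ (3:ℕ))⁻¹
        * ((1 + I.len⁻¹ * |x - I.center|) ^ (3:ℕ))⁻¹)
      ≤ ENNReal.ofReal (1536 / |x - t| ^ 2) := by
  set D := |x - t| with hD
  have hDpos : 0 < D := abs_pos.mpr (sub_ne_zero.mpr hxt)
  rw [← Equiv.tsum_eq dEquiv]
  rw [ENNReal.tsum_prod']
  -- notation
  set G : ℤ → ℝ := fun j => 8 * ((((2:ℝ)^j)^2)⁻¹ * ((1 + ((2:ℝ)^j)⁻¹ * D)^3)⁻¹) with hG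
  set q : ℝ → ℤ → ℤ → ℝ :=
    fun s j k => ((1 + |(s/(2:ℝ)^j - 1/2) - (k:ℝ)|)^2)⁻¹ with hq
  have hGnn : ∀ j, 0 ≤ G j := by
    intro j
    have := zpow_pos (show (0:ℝ) < 2 by norm_num) j
    positivity
  have hqnn : ∀ s j k, 0 ≤ q s j k := by
    intro s j k
    rw [hq]
    positivity
  have hpt : ∀ j k : ℤ,
      ENNReal.ofReal (((dEquiv (j,k)).len ^ (2:ℕ))⁻¹
        * ((1 + (dEquiv (j,k)).len⁻¹ * |t - (dEquiv (j,k)).center|) ^ (3:ℕ))⁻¹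
        * ((1 + (dEquiv (j,k)).len⁻¹ * |x - (dEquiv (j,k)).center|) ^ (3:ℕ))⁻¹)
      ≤ ENNReal.ofReal (G j) * ENNReal.ofReal (q x j k + q t j k) := by
    intro j k
    have hl : (0:ℝ) < (2:ℝ)^j := zpow_pos (by norm_num) j
    have hlen : (dEquiv (j,k)).len = (2:ℝ)^j := rfl
    have hcen : (dEquiv (j,k)).center = ((k:ℝ) + 1/2) * (2:ℝ)^j := rfl
    set A := ((2:ℝ)^j)⁻¹ * |x - ((k:ℝ) + 1/2) * (2:ℝ)^j| with hA
    set B := ((2:ℝ)^j)⁻¹ * |t - ((k:ℝ) + 1/2) * (2:ℝ)^j| with hB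
    have hAnn : 0 ≤ A := by rw [hA]; positivity
    have hBnn : 0 ≤ B := by rw [hB]; positivity
    have hR : (0:ℝ) ≤ ((2:ℝ)^j)⁻¹ * D := by positivity
    have hAB : ((2:ℝ)^j)⁻¹ * D ≤ A + B := by
      rw [hA, hB, ← mul_add]
      apply mul_le_mul_of_nonneg_left _ (by positivity)
      calc D = |(x - ((k:ℝ) + 1/2) * (2:ℝ)^j) - (t - ((k:ℝ) + 1/2) * (2:ℝ)^j)| := by
            rw [hD]; congr 1; ring
        _ ≤ |x - ((k:ℝ) + 1/2) * (2:ℝ)^j| + |t - ((k:ℝ) + 1/2) * (2:ℝ)^j| :=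
            abs_sub _ _
    have halg := alg hAnn hBnn hR hAB
    have hqx : q x j k = ((1 + A)^2)⁻¹ := by
      have e1 : x/(2:ℝ)^j - 1/2 - (k:ℝ) = ((2:ℝ)^j)⁻¹ * (x - ((k:ℝ) + 1/2) * (2:ℝ)^j) := by
        field_simp
        ring
      simp only [hq]
      rw [e1, abs_mul, abs_of_pos (inv_pos.mpr hl), ← hA]
    have hqt : q t j k = ((1 + B)^2)⁻¹ := by
      have e1 : t/(2:ℝ)^j - 1/2 - (k:ℝ) = ((2:ℝ)^j)⁻¹ * (t - ((k:ℝ) + 1/2) * (2:ℝ)^j) := by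
        field_simp
        ring
      simp only [hq]
      rw [e1, abs_mul, abs_of_pos (inv_pos.mpr hl), ← hB]
    have hreal : ((dEquiv (j,k)).len ^ (2:ℕ))⁻¹
        * ((1 + (dEquiv (j,k)).len⁻¹ * |t - (dEquiv (j,k)).center|) ^ (3:ℕ))⁻¹
        * ((1 + (dEquiv (j,k)).len⁻¹ * |x - (dEquiv (j,k)).center|) ^ (3:ℕ))⁻¹
        ≤ G j * (q x j k + q t j k) := by
      rw [hlen, hcen, ← hA, ← hB, hqx, hqt, hG]
      calc (((2:ℝ)^j) ^ (2:ℕ))⁻¹ * ((1 + B) ^ (3:ℕ))⁻¹ * ((1 + A) ^ (3:ℕ))⁻¹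
          = (((2:ℝ)^j) ^ (2:ℕ))⁻¹ * (((1 + B) ^ 3)⁻¹ * ((1 + A) ^ 3)⁻¹) := by ring
        _ ≤ (((2:ℝ)^j) ^ (2:ℕ))⁻¹
            * (8 * ((1 + ((2:ℝ)^j)⁻¹ * D) ^ 3)⁻¹ * (((1 + A)^2)⁻¹ + ((1 + B)^2)⁻¹)) := by
            apply mul_le_mul_of_nonneg_left halg (by positivity)
        _ = 8 * ((((2:ℝ)^j)^2)⁻¹ * ((1 + ((2:ℝ)^j)⁻¹ * D)^3)⁻¹)
            * (((1 + A)^2)⁻¹ + ((1 + B)^2)⁻¹) := by ring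
    calc ENNReal.ofReal _ ≤ ENNReal.ofReal (G j * (q x j k + q t j k)) :=
          ENNReal.ofReal_le_ofReal hreal
      _ = ENNReal.ofReal (G j) * ENNReal.ofReal (q x j k + q t j k) :=
          ENNReal.ofReal_mul (hGnn j)
  calc ∑' (j : ℤ) (k : ℤ), ENNReal.ofReal (((dEquiv (j,k)).len ^ (2:ℕ))⁻¹
        * ((1 + (dEquiv (j,k)).len⁻¹ * |t - (dEquiv (j,k)).center|) ^ (3:ℕ))⁻¹
        * ((1 + (dEquiv (j,k)).len⁻¹ * |x - (dEquiv (j,k)).center|) ^ (3:ℕ))⁻¹)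
      ≤ ∑' (j : ℤ) (k : ℤ), ENNReal.ofReal (G j) * ENNReal.ofReal (q x j k + q t j k) :=
        ENNReal.tsum_le_tsum fun j => ENNReal.tsum_le_tsum fun k => hpt j k
    _ ≤ ∑' (j : ℤ), ENNReal.ofReal (G j) * ENNReal.ofReal 48 := by
        apply ENNReal.tsum_le_tsum
        intro j
        rw [ENNReal.tsum_mul_left]
        apply mul_le_mul_right
        have hsplit : ∀ k : ℤ, ENNReal.ofReal (q x j k + q t j k)
            = ENNReal.ofReal (q x j k) + ENNReal.ofReal (q t j k) := fun k =>
          ENNReal.ofReal_add (hqnn x j k) (hqnn t j k)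
        calc ∑' k : ℤ, ENNReal.ofReal (q x j k + q t j k)
            = (∑' k : ℤ, ENNReal.ofReal (q x j k)) + ∑' k : ℤ, ENNReal.ofReal (q t j k) := by
              simp_rw [hsplit]
              exact ENNReal.tsum_add
          _ ≤ ENNReal.ofReal 24 + ENNReal.ofReal 24 := by
              apply add_le_add
              · exact ksum (x/(2:ℝ)^j - 1/2)
              · exact ksum (t/(2:ℝ)^j - 1/2)
          _ = ENNReal.ofReal 48 := by
              rw [← ENNReal.ofReal_add (by norm_num) (by norm_num)]
              norm_num
    _ = (∑' (j : ℤ), ENNReal.ofReal (G j)) * ENNReal.ofReal 48 := ENNReal.tsum_mul_right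
    _ ≤ (ENNReal.ofReal 8 * ENNReal.ofReal (4 / D^2)) * ENNReal.ofReal 48 := by
        apply mul_le_mul_left
        have : ∀ j : ℤ, ENNReal.ofReal (G j) = ENNReal.ofReal 8
            * ENNReal.ofReal ((((2:ℝ)^j)^2)⁻¹ * ((1 + ((2:ℝ)^j)⁻¹ * D)^3)⁻¹) := by
          intro j
          rw [hG, ENNReal.ofReal_mul (by norm_num)]
        simp_rw [this]
        rw [ENNReal.tsum_mul_left]
        exact mul_le_mul_right (jsum hDpos) _
    _ ≤ ENNReal.ofReal (1536 / D^2) := by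
        rw [← ENNReal.ofReal_mul (by norm_num), ← ENNReal.ofReal_mul (by positivity)]
        apply ENNReal.ofReal_le_ofReal
        rw [show (8:ℝ) * (4/D^2) * 48 = 1536 / D^2 by ring]

lemma integral_bound (N : ℕ) (hN : 3 ≤ N) (x t : ℝ) (a b : DyadicI → ℝ)
    (ha : ∀ I : DyadicI, |a I| ≤ I.len ^ (-(2:ℝ)) * (1 + I.len⁻¹ * |t - I.center|) ^ (-(N:ℝ)))
    (hb : ∀ I : DyadicI, |b I| ≤ I.len ^ (-(1/2:ℝ)) * (1 + I.len⁻¹ * |x - I.center|) ^ (-(N:ℝ)))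
    (hxt : x ≠ t) :
    (∫ y, Real.sqrt (∑' I : DyadicI,
        (a I) ^ 2 * (b I) ^ 2 * Set.indicator I.toSet (fun _ => (1 : ℝ)) y / I.len))
      ≤ 1536 / |x - t| ^ 2 := by
  set u : DyadicI → ℝ → ℝ := fun I y =>
    (a I) ^ 2 * (b I) ^ 2 * Set.indicator I.toSet (fun _ => (1:ℝ)) y / I.len with hu
  show (∫ y, Real.sqrt (∑' I : DyadicI, u I y)) ≤ 1536 / |x - t| ^ 2
  have hmeasSet : ∀ I : DyadicI, MeasurableSet I.toSet := fun I => measurableSet_Ico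
  have hu_nonneg : ∀ (I : DyadicI) (y : ℝ), 0 ≤ u I y := by
    intro I y
    have hind : (0:ℝ) ≤ Set.indicator I.toSet (fun _ => (1:ℝ)) y :=
      Set.indicator_nonneg (fun _ _ => zero_le_one) y
    have hl := len_pos I
    simp only [hu]
    positivity
  set r : DyadicI → ℝ := fun I =>
    I.len ^ (-(3:ℝ)) * (1 + I.len⁻¹ * |t - I.center|) ^ (-(N:ℝ))
      * (1 + I.len⁻¹ * |x - I.center|) ^ (-(N:ℝ)) with hr
  have hwt : ∀ I : DyadicI, (0:ℝ) ≤ 1 + I.len⁻¹ * |t - I.center| := by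
    intro I
    have : (0:ℝ) ≤ I.len⁻¹ * |t - I.center| :=
      mul_nonneg (inv_nonneg.mpr (len_pos I).le) (abs_nonneg _)
    linarith
  have hwx : ∀ I : DyadicI, (0:ℝ) ≤ 1 + I.len⁻¹ * |x - I.center| := by
    intro I
    have : (0:ℝ) ≤ I.len⁻¹ * |x - I.center| :=
      mul_nonneg (inv_nonneg.mpr (len_pos I).le) (abs_nonneg _)
    linarith
  have hr_nonneg : ∀ I : DyadicI, 0 ≤ r I := by
    intro I
    simp only [hr]
    apply mul_nonneg
    apply mul_nonneg (Real.rpow_nonneg (len_pos I).le _)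
    · exact Real.rpow_nonneg (hwt I) _
    · exact Real.rpow_nonneg (hwx I) _
  -- step A : pointwise bound on sqrt of each term
  have hstepA : ∀ (I : DyadicI) (y : ℝ),
      Real.sqrt (u I y) ≤ Set.indicator I.toSet (fun _ => r I) y := by
    intro I y
    have hl := len_pos I
    by_cases hy : y ∈ I.toSet
    · rw [Set.indicator_of_mem hy]
      simp only [hu, Set.indicator_of_mem hy]
      have e : (a I) ^ 2 * (b I) ^ 2 * (1:ℝ) / I.len
          = (a I) ^ 2 * ((b I) ^ 2 * I.len⁻¹) := by
        rw [div_eq_mul_inv]; ring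
      rw [e, Real.sqrt_mul (sq_nonneg _), Real.sqrt_mul (sq_nonneg _),
        Real.sqrt_sq_eq_abs, Real.sqrt_sq_eq_abs]
      have hsq : Real.sqrt I.len⁻¹ = I.len ^ (-(1/2):ℝ) := by
        rw [Real.sqrt_eq_rpow, Real.inv_rpow hl.le, ← Real.rpow_neg hl.le]
      rw [hsq]
      have h2 : |b I| * I.len ^ (-(1/2):ℝ)
          ≤ (I.len ^ (-(1/2:ℝ)) * (1 + I.len⁻¹ * |x - I.center|) ^ (-(N:ℝ)))
            * I.len ^ (-(1/2):ℝ) :=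
        mul_le_mul_of_nonneg_right (hb I) (Real.rpow_nonneg hl.le _)
      calc |a I| * (|b I| * I.len ^ (-(1/2):ℝ))
          ≤ (I.len ^ (-(2:ℝ)) * (1 + I.len⁻¹ * |t - I.center|) ^ (-(N:ℝ)))
            * ((I.len ^ (-(1/2:ℝ)) * (1 + I.len⁻¹ * |x - I.center|) ^ (-(N:ℝ)))
              * I.len ^ (-(1/2):ℝ)) := by
            apply mul_le_mul (ha I) h2
            · exact mul_nonneg (abs_nonneg _) (Real.rpow_nonneg hl.le _)
            · exact mul_nonneg (Real.rpow_nonneg hl.le _) (Real.rpow_nonneg (hwt I) _)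
        _ = (I.len ^ (-(2:ℝ)) * I.len ^ (-(1/2):ℝ) * I.len ^ (-(1/2):ℝ))
            * ((1 + I.len⁻¹ * |t - I.center|) ^ (-(N:ℝ))
              * (1 + I.len⁻¹ * |x - I.center|) ^ (-(N:ℝ))) := by ring
        _ = r I := by
            rw [← Real.rpow_add hl, ← Real.rpow_add hl,
              show (-(2:ℝ) + -(1/2) + -(1/2)) = -(3:ℝ) by norm_num]
            simp only [hr]
            ring
    · rw [Set.indicator_of_notMem hy]
      simp only [hu, Set.indicator_of_notMem hy]
      rw [mul_zero, zero_div, Real.sqrt_zero]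
  -- step B : pointwise bound in ENNReal
  have hstepB : ∀ y : ℝ, ENNReal.ofReal (Real.sqrt (∑' I : DyadicI, u I y))
      ≤ ∑' I : DyadicI, Set.indicator I.toSet (fun _ => ENNReal.ofReal (r I)) y := by
    intro y
    refine le_trans (ofReal_sqrt_tsum_le (fun I => hu_nonneg I y)) ?_
    apply ENNReal.tsum_le_tsum
    intro I
    have h := hstepA I y
    by_cases hy : y ∈ I.toSet
    · rw [Set.indicator_of_mem hy]
      rw [Set.indicator_of_mem hy] at h
      exact ENNReal.ofReal_le_ofReal h
    · rw [Set.indicator_of_notMem hy]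
      rw [Set.indicator_of_notMem hy] at h
      rw [show Real.sqrt (u I y) = 0 from le_antisymm h (Real.sqrt_nonneg _)]
      simp
  -- measurability
  have humeas : ∀ I : DyadicI, Measurable (u I) := by
    intro I
    simp only [hu]
    exact ((measurable_const.indicator (hmeasSet I)).const_mul _).div_const _
  have hFmeas : Measurable (fun y => Real.sqrt (∑' I : DyadicI, u I y)) := by
    have he : (fun y => Real.sqrt (∑' I : DyadicI, u I y))
        = fun y => Real.sqrt ((∑' I : DyadicI, ENNReal.ofReal (u I y)).toReal) := by
      funext y
      rw [tsum_eq_toReal (fun I => hu_nonneg I y)]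
    rw [he]
    exact (Measurable.ennreal_tsum
      (fun I => (humeas I).ennreal_ofReal)).ennreal_toReal.sqrt
  have h0 : 0 ≤ᵐ[volume] fun y => Real.sqrt (∑' I : DyadicI, u I y) :=
    Filter.Eventually.of_forall fun y => Real.sqrt_nonneg _
  rw [integral_eq_lintegral_of_nonneg_ae h0 hFmeas.aestronglyMeasurable]
  apply ENNReal.toReal_le_of_le_ofReal (by positivity)
  calc ∫⁻ y, ENNReal.ofReal (Real.sqrt (∑' I : DyadicI, u I y))
      ≤ ∫⁻ y, ∑' I : DyadicI, Set.indicator I.toSet (fun _ => ENNReal.ofReal (r I)) y :=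
        lintegral_mono hstepB
    _ = ∑' I : DyadicI, ∫⁻ y, Set.indicator I.toSet (fun _ => ENNReal.ofReal (r I)) y :=
        lintegral_tsum (fun I =>
          (measurable_const.indicator (hmeasSet I)).aemeasurable)
    _ = ∑' I : DyadicI, ENNReal.ofReal (r I) * ENNReal.ofReal I.len := by
        apply tsum_congr
        intro I
        rw [lintegral_indicator_const (hmeasSet I), volume_toSet I]
    _ = ∑' I : DyadicI, ENNReal.ofReal (r I * I.len) := by
        apply tsum_congr
        intro I
        rw [ENNReal.ofReal_mul (hr_nonneg I)]
    _ ≤ ∑' I : DyadicI, ENNReal.ofReal ((I.len ^ (2:ℕ))⁻¹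
        * ((1 + I.len⁻¹ * |t - I.center|) ^ (3:ℕ))⁻¹
        * ((1 + I.len⁻¹ * |x - I.center|) ^ (3:ℕ))⁻¹) := by
        apply ENNReal.tsum_le_tsum
        intro I
        apply ENNReal.ofReal_le_ofReal
        simp only [hr]
        exact r_mul_len_le x t N hN I
    _ ≤ ENNReal.ofReal (1536 / |x - t| ^ 2) := main_sum x t hxt

end S9

/-- kernel smoothness estimate: with the additional derivative bounds
`|φ_I'(t)| ≤ |I|^{-2}(1+|I|^{-1}|t−c(I)|)^{-N}`, the `L¹` norm in `y` of the square function
built from `φ_I'` is bounded by `C/|x−t|²`. -/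
theorem statement9 (N : ℕ) (hN : 3 ≤ N) :
    ∃ C : ℝ, 0 < C ∧
    ∀ ψ φ : DyadicI → ℝ → ℝ,
      (∀ (I : DyadicI) (x : ℝ),
        |ψ I x| ≤ I.len ^ (-(1/2 : ℝ)) * (1 + I.len⁻¹ * |x - I.center|) ^ (-(N : ℝ))) →
      (∀ (I : DyadicI) (x : ℝ),
        |φ I x| ≤ I.len⁻¹ * (1 + I.len⁻¹ * |x - I.center|) ^ (-(N : ℝ))) →
      (∀ I : DyadicI, Differentiable ℝ (φ I)) →
      (∀ (I : DyadicI) (t : ℝ),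
        |deriv (φ I) t| ≤ I.len ^ (-(2 : ℝ)) * (1 + I.len⁻¹ * |t - I.center|) ^ (-(N : ℝ))) →
      ∀ x t : ℝ, x ≠ t →
        (∫ y, Real.sqrt (∑' I : DyadicI,
            (deriv (φ I) t) ^ 2 * (ψ I x) ^ 2 *
              Set.indicator I.toSet (fun _ => (1 : ℝ)) y / I.len)) ≤
          C / |x - t| ^ 2 := by
  refine ⟨1536, by norm_num, ?_⟩
  intro ψ φ hψ hφ hdiff hd x t hxt
  exact S9.integral_bound N hN x t (fun I => deriv (φ I) t) (fun I => ψ I x)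
    (fun I => hd I t) (fun I => hψ I x) hxt
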